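/- Let X and Y be finite-dimensional real inner product spaces, let B ⊆ Y be a nonempty compact convex set with M_B := sup_{u ∈ B} ‖u‖, let c ≥ 0, let h : Y → ℝ be a convex differentiable function satisfying σ_B(y) ≤ h(y) ≤ σ_B(y) + c for all y ∈ Y, and let G : X → Y be continuously differentiable. Then for the composition g := h ∘ G, one has ‖∇g(x)‖ ≤ M_B · ‖DG(x)‖ for every x ∈ X, where ‖DG(x)‖ denotes the operator norm of the derivative of G at x. -/

import Mathlib

open scoped InnerProductSpace
open Topology Filter

/-- If `h` is convex differentiable and sandwiched between the support function `σ_B`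
of a nonempty compact convex set `B` and `σ_B + c`, and `G` is continuously
differentiable, then the gradient of `g = h ∘ G` satisfies
`‖∇g(x)‖ ≤ M_B ‖DG(x)‖`, where `M_B = sup_{u ∈ B} ‖u‖`. -/
theorem norm_grad_comp_le
    {X Y : Type*} [NormedAddCommGroup X] [InnerProductSpace ℝ X] [FiniteDimensional ℝ X]
    [NormedAddCommGroup Y] [InnerProductSpace ℝ Y] [FiniteDimensional ℝ Y]
    (B : Set Y) (hBne : B.Nonempty) (hBcompact : IsCompact B) (hBconv : Convex ℝ B)
    (MB : ℝ) (hMB : MB = sSup ((fun u : Y => ‖u‖) '' B))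
    (c : ℝ) (hc : 0 ≤ c)
    (h : Y → ℝ) (hconv : ConvexOn ℝ Set.univ h) (hdiff : Differentiable ℝ h)
    (hsand : ∀ y : Y, sSup ((fun u => ⟪y, u⟫_ℝ) '' B) ≤ h y ∧
      h y ≤ sSup ((fun u => ⟪y, u⟫_ℝ) '' B) + c)
    (G : X → Y) (hG : ContDiff ℝ 1 G) :
    ∀ x : X, ‖gradient (h ∘ G) x‖ ≤ MB * ‖fderiv ℝ G x‖ := by
  set σ : Y → ℝ := fun y => sSup ((fun u => ⟪y, u⟫_ℝ) '' B) with hσ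
  -- norms of elements of B are bounded by MB
  have hbddnorm : BddAbove ((fun u : Y => ‖u‖) '' B) :=
    (hBcompact.image continuous_norm).bddAbove
  have hu_le : ∀ u ∈ B, ‖u‖ ≤ MB := fun u hu => hMB ▸ le_csSup hbddnorm ⟨u, hu, rfl⟩
  have hMB0 : 0 ≤ MB := by
    obtain ⟨u, hu⟩ := hBne
    exact le_trans (norm_nonneg u) (hu_le u hu)
  have hbdd : ∀ y : Y, BddAbove ((fun u => ⟪y, u⟫_ℝ) '' B) := fun y =>
    (hBcompact.image (continuous_const.inner continuous_id)).bddAbove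
  have hσ_le : ∀ y : Y, σ y ≤ MB * ‖y‖ := by
    intro y
    apply csSup_le (hBne.image _)
    rintro r ⟨u, hu, rfl⟩
    calc ⟪y, u⟫_ℝ ≤ ‖y‖ * ‖u‖ := real_inner_le_norm y u
      _ ≤ ‖y‖ * MB := by
        exact mul_le_mul_of_nonneg_left (hu_le u hu) (norm_nonneg y)
      _ = MB * ‖y‖ := mul_comm _ _
  -- subadditivity
  have hσ_add : ∀ (y v : Y) (t : ℝ), 0 ≤ t → σ (y + t • v) ≤ σ y + t * σ v := by
    intro y v t ht
    apply csSup_le (hBne.image _)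
    rintro r ⟨u, hu, rfl⟩
    have h1 : ⟪y, u⟫_ℝ ≤ σ y := le_csSup (hbdd y) ⟨u, hu, rfl⟩
    have h2 : ⟪v, u⟫_ℝ ≤ σ v := le_csSup (hbdd v) ⟨u, hu, rfl⟩
    have heq : ⟪y + t • v, u⟫_ℝ = ⟪y, u⟫_ℝ + t * ⟪v, u⟫_ℝ := by
      simp [inner_add_left, inner_smul_left]
    show ⟪y + t • v, u⟫_ℝ ≤ σ y + t * σ v
    rw [heq]
    exact add_le_add h1 (mul_le_mul_of_nonneg_left h2 ht)
  -- convex subgradient inequality: fderiv h y v ≤ h (y + v) - h y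
  have hsub : ∀ y v : Y, fderiv ℝ h y v ≤ h (y + v) - h y := by
    intro y v
    set L : ℝ →ᵃ[ℝ] Y := AffineMap.lineMap y (y + v) with hL
    have hφconv : ConvexOn ℝ Set.univ (h ∘ L) := by
      have := hconv.comp_affineMap L
      simpa using this
    have hLd : HasDerivAt (fun t : ℝ => L t) v 0 := by
      have : (fun t : ℝ => L t) = fun t : ℝ => y + t • v := by
        funext t
        simp [hL, AffineMap.lineMap_apply]
        module
      rw [this]
      simpa using ((hasDerivAt_id (0:ℝ)).smul_const v).const_add y
    have hφd : HasDerivAt (h ∘ L) (fderiv ℝ h y v) 0 := by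
      have hy : HasFDerivAt h (fderiv ℝ h y) y := (hdiff y).hasFDerivAt
      have : HasFDerivAt h (fderiv ℝ h y) (L 0) := by
        simpa [hL, AffineMap.lineMap_apply] using hy
      exact this.comp_hasDerivAt 0 hLd
    have := hφconv.le_slope_of_hasDerivAt (Set.mem_univ (0:ℝ)) (Set.mem_univ (1:ℝ))
      one_pos hφd
    rw [add_comm y v]
    simpa [slope, hL, AffineMap.lineMap_apply, Function.comp] using this
  -- gradient bound for h
  have key : ∀ y : Y, ‖fderiv ℝ h y‖ ≤ MB := by
    intro y
    have hfv : ∀ v : Y, fderiv ℝ h y v ≤ σ v := by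
      intro v
      have hstep : ∀ t : ℝ, 0 < t → fderiv ℝ h y v ≤ σ v + c / t := by
        intro t ht
        have h1 : fderiv ℝ h y (t • v) ≤ h (y + t • v) - h y := hsub y (t • v)
        have h2 : h (y + t • v) ≤ σ (y + t • v) + c := (hsand _).2
        have h3 : σ y ≤ h y := (hsand _).1
        have h4 : σ (y + t • v) ≤ σ y + t * σ v := hσ_add y v t ht.le
        have hsm : fderiv ℝ h y (t • v) = t * fderiv ℝ h y v := by
          rw [(fderiv ℝ h y).map_smul]; simp
        have hmain : t * fderiv ℝ h y v ≤ t * σ v + c := by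
          rw [hsm] at h1
          nlinarith [h1, h2, h3, h4]
        rw [← mul_le_mul_iff_right₀ ht]
        calc t * fderiv ℝ h y v ≤ t * σ v + c := hmain
          _ = t * (σ v + c / t) := by field_simp
      have hlim : Filter.Tendsto (fun t : ℝ => σ v + c / t) Filter.atTop (𝓝 (σ v + 0)) :=
        Filter.Tendsto.add tendsto_const_nhds
          (Filter.Tendsto.div_atTop tendsto_const_nhds Filter.tendsto_id)
      have := ge_of_tendsto hlim (by
        filter_upwards [Filter.eventually_gt_atTop (0:ℝ)] with t ht
        exact hstep t ht)
      simpa using this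
    apply ContinuousLinearMap.opNorm_le_bound _ hMB0
    intro v
    rw [Real.norm_eq_abs, abs_le]
    constructor
    · have := (hfv (-v)).trans (hσ_le (-v))
      simp only [map_neg] at this
      rw [norm_neg] at this
      linarith
    · exact (hfv v).trans (hσ_le v)
  -- conclusion
  intro x
  have hGd : DifferentiableAt ℝ G x := (hG.differentiable one_ne_zero).differentiableAt
  have hcomp : fderiv ℝ (h ∘ G) x = (fderiv ℝ h (G x)).comp (fderiv ℝ G x) :=
    fderiv_comp x (hdiff (G x)) hGd
  have hnorm : ‖gradient (h ∘ G) x‖ = ‖fderiv ℝ (h ∘ G) x‖ := by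
    rw [gradient]
    exact (InnerProductSpace.toDual ℝ X).symm.norm_map _
  rw [hnorm, hcomp]
  calc ‖(fderiv ℝ h (G x)).comp (fderiv ℝ G x)‖
      ≤ ‖fderiv ℝ h (G x)‖ * ‖fderiv ℝ G x‖ := ContinuousLinearMap.opNorm_comp_le _ _
    _ ≤ MB * ‖fderiv ℝ G x‖ :=
        mul_le_mul_of_nonneg_right (key (G x)) (norm_nonneg _)
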